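/- Let (M₁,d₁,m₀), (M₂,d₂,n₀) be pointed metric spaces with wedge metric d = d_{∨,∞} (p = ∞ glue). Let S be a finite subset of the wedge, t ≥ 0, and suppose: S ∩ M₁ = {x₁,x₂} with d₁(x₁,x₂) > t and d₁(x_i, m₀) ≤ t; S ∩ (M₂ \ {n₀}) = {y₁,y₂} with d₂(y₁,y₂) > t and d₂(y_j, n₀) ≤ t; and m₀ ∉ S. Then the Vietoris–Rips complex of S at scale t has 1-skeleton equal to the complete bipartite graph K_{2,2} (the four mixed pairs are edges, the two within-side pairs are not) and contains no 2-simplices; hence it is a 4-cycle. -/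
import Mathlib


open scoped ENNReal

/-- A function `d : X → X → ℝ` is a metric. -/
def IsMetric {X : Type*} (d : X → X → ℝ) : Prop :=
  (∀ x y, 0 ≤ d x y) ∧ (∀ x y, d x y = 0 ↔ x = y) ∧ (∀ x y, d x y = d y x) ∧
    (∀ x y z, d x z ≤ d x y + d y z)

/-- The `ℓ^p` norm of a pair of reals, `p ∈ [1,∞]`. -/
noncomputable def lpnorm (p : ℝ≥0∞) (a b : ℝ) : ℝ :=
  if p = ∞ then max |a| |b| else (|a| ^ p.toReal + |b| ^ p.toReal) ^ (1 / p.toReal)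

/-- The `ℓ^p`-wedge distance on the disjoint union `M₁ ⊕ M₂` (basepoints `m₀, n₀`):
`d₁` on `M₁`, `d₂` on `M₂`, cross distances `‖(d₁(x,m₀), d₂(y,n₀))‖_{ℓ^p}`.
Passing to the quotient identifying `m₀ ∼ n₀` gives the wedge metric `d_{∨,p}`. -/
noncomputable def dWedge {M₁ M₂ : Type*} (d₁ : M₁ → M₁ → ℝ) (d₂ : M₂ → M₂ → ℝ)
    (m₀ : M₁) (n₀ : M₂) (p : ℝ≥0∞) : M₁ ⊕ M₂ → M₁ ⊕ M₂ → ℝ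
  | Sum.inl a, Sum.inl b => d₁ a b
  | Sum.inr a, Sum.inr b => d₂ a b
  | Sum.inl a, Sum.inr b => lpnorm p (d₁ a m₀) (d₂ b n₀)
  | Sum.inr a, Sum.inl b => lpnorm p (d₁ b m₀) (d₂ a n₀)

/-- in the `p = ∞` wedge, a cloud `{x₁,x₂} ⊆ M₁`, `{y₁,y₂} ⊆ M₂ \ {n₀}`
(with `m₀` not in the cloud) whose within-side distances exceed `t` and whose radii to the
basepoints are `≤ t` has Rips 1-skeleton at scale `t` equal to `K_{2,2}`: all four mixed
pairs are edges, neither within-side pair is an edge, and there is no 2-simplex. -/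
theorem wedge_rips_K22 {M₁ M₂ : Type*} (d₁ : M₁ → M₁ → ℝ) (d₂ : M₂ → M₂ → ℝ)
    (hd₁ : IsMetric d₁) (hd₂ : IsMetric d₂) (m₀ : M₁) (n₀ : M₂)
    (t : ℝ) (ht : 0 ≤ t) (x₁ x₂ : M₁) (y₁ y₂ : M₂)
    (hx12 : t < d₁ x₁ x₂) (hx1r : d₁ x₁ m₀ ≤ t) (hx2r : d₁ x₂ m₀ ≤ t)
    (hy12 : t < d₂ y₁ y₂) (hy1r : d₂ y₁ n₀ ≤ t) (hy2r : d₂ y₂ n₀ ≤ t)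
    (hx1m : x₁ ≠ m₀) (hx2m : x₂ ≠ m₀) (hy1n : y₁ ≠ n₀) (hy2n : y₂ ≠ n₀) :
    (dWedge d₁ d₂ m₀ n₀ ∞ (Sum.inl x₁) (Sum.inr y₁) ≤ t ∧
     dWedge d₁ d₂ m₀ n₀ ∞ (Sum.inl x₁) (Sum.inr y₂) ≤ t ∧
     dWedge d₁ d₂ m₀ n₀ ∞ (Sum.inl x₂) (Sum.inr y₁) ≤ t ∧
     dWedge d₁ d₂ m₀ n₀ ∞ (Sum.inl x₂) (Sum.inr y₂) ≤ t) ∧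
    ¬ dWedge d₁ d₂ m₀ n₀ ∞ (Sum.inl x₁) (Sum.inl x₂) ≤ t ∧
    ¬ dWedge d₁ d₂ m₀ n₀ ∞ (Sum.inr y₁) (Sum.inr y₂) ≤ t ∧
    (∀ u v w : M₁ ⊕ M₂,
      u ∈ ({Sum.inl x₁, Sum.inl x₂, Sum.inr y₁, Sum.inr y₂} : Set (M₁ ⊕ M₂)) →
      v ∈ ({Sum.inl x₁, Sum.inl x₂, Sum.inr y₁, Sum.inr y₂} : Set (M₁ ⊕ M₂)) →
      w ∈ ({Sum.inl x₁, Sum.inl x₂, Sum.inr y₁, Sum.inr y₂} : Set (M₁ ⊕ M₂)) →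
      u ≠ v → u ≠ w → v ≠ w →
      ¬ (dWedge d₁ d₂ m₀ n₀ ∞ u v ≤ t ∧ dWedge d₁ d₂ m₀ n₀ ∞ u w ≤ t ∧
          dWedge d₁ d₂ m₀ n₀ ∞ v w ≤ t)) := by

  obtain ⟨h1pos, h1eq, h1sym, h1tri⟩ := hd₁
  obtain ⟨h2pos, h2eq, h2sym, h2tri⟩ := hd₂
  have cross : ∀ (a : M₁) (b : M₂), d₁ a m₀ ≤ t → d₂ b n₀ ≤ t →
      dWedge d₁ d₂ m₀ n₀ ∞ (Sum.inl a) (Sum.inr b) ≤ t := by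
    intro a b ha hb
    simp only [dWedge, lpnorm, if_pos rfl]
    rw [abs_of_nonneg (h1pos a m₀), abs_of_nonneg (h2pos b n₀)]
    exact max_le ha hb
  have cross' : ∀ (a : M₁) (b : M₂), d₁ a m₀ ≤ t → d₂ b n₀ ≤ t →
      dWedge d₁ d₂ m₀ n₀ ∞ (Sum.inr b) (Sum.inl a) ≤ t := by
    intro a b ha hb
    simp only [dWedge, lpnorm, if_pos rfl]
    rw [abs_of_nonneg (h1pos a m₀), abs_of_nonneg (h2pos b n₀)]
    exact max_le ha hb
  have hx21 : t < d₁ x₂ x₁ := by rw [h1sym]; exact hx12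
  have hy21 : t < d₂ y₂ y₁ := by rw [h2sym]; exact hy12
  refine ⟨⟨cross _ _ hx1r hy1r, cross _ _ hx1r hy2r, cross _ _ hx2r hy1r,
      cross _ _ hx2r hy2r⟩, ?_, ?_, ?_⟩
  · simp only [dWedge]; linarith
  · simp only [dWedge]; linarith
  · intro u v w hu hv hw huv huw hvw
    rintro ⟨h1, h2, h3⟩
    simp only [Set.mem_insert_iff, Set.mem_singleton_iff] at hu hv hw
    rcases hu with rfl | rfl | rfl | rfl <;>
      rcases hv with rfl | rfl | rfl | rfl <;>
        rcases hw with rfl | rfl | rfl | rfl <;>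
          first
            | exact huv rfl
            | exact huw rfl
            | exact hvw rfl
            | (simp only [dWedge] at h1 h2 h3; linarith)
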